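/- Let ι be a nonempty finite type and let Ξ be a nonempty, convex, compact subset of the probability simplex on ι consisting only of vectors with all entries strictly positive. Then inf over probability vectors p on ι of (sup over q ∈ Ξ of the cross-entropy −∑_i q i · log (p i)) equals sup over q ∈ Ξ of the entropy −∑_i q i · log (q i). Moreover, any entropy maximizer q* ∈ Ξ attains this common value as the minimizing p. -/
import Mathlib


/-- Extended-real negative logarithm: −log x for x > 0, and ⊤ at x = 0
(an impossible event under a positive-probability label incurs infinite log loss). -/
noncomputable def negLogE (x : ℝ) : EReal :=
  if x = 0 then ⊤ else ((-Real.log x : ℝ) : EReal)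

/-- Extended-real cross-entropy −∑_i q i · log (p i) of a predictor p relative to
a label approximator q. -/
noncomputable def crossEntropyE {ι : Type*} [Fintype ι] (p q : ι → ℝ) : EReal :=
  ∑ i, (q i : EReal) * negLogE (p i)

section aux

variable {ι : Type*} [Fintype ι]

lemma coe_sum_EReal (f : ι → ℝ) : ((∑ i, f i : ℝ) : EReal) = ∑ i, (f i : EReal) :=
  map_sum (⟨⟨(Real.toEReal), EReal.coe_zero⟩, EReal.coe_add⟩ : ℝ →+ EReal) f Finset.univ

lemma sum_ne_bot_EReal (f : ι → EReal) (h : ∀ i, f i ≠ ⊥) :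
    ∑ i, f i ≠ ⊥ := by
  classical
  induction (Finset.univ : Finset ι) using Finset.cons_induction with
  | empty => simp
  | cons a s ha ih =>
    rw [Finset.sum_cons, Ne, EReal.add_eq_bot_iff]
    push_neg
    exact ⟨h a, ih⟩

lemma crossEntropyE_coe (p q : ι → ℝ) (hp : ∀ i, p i ≠ 0) :
    crossEntropyE p q = ((-∑ i, q i * Real.log (p i) : ℝ) : EReal) := by
  unfold crossEntropyE negLogE
  have : ∀ i, (q i : EReal) * (if p i = 0 then ⊤ else ((-Real.log (p i) : ℝ) : EReal))
      = ((q i * -Real.log (p i) : ℝ) : EReal) := fun i => by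
    rw [if_neg (hp i), ← EReal.coe_mul]
  rw [Finset.sum_congr rfl (fun i _ => this i), ← coe_sum_EReal]
  norm_cast
  rw [← Finset.sum_neg_distrib]
  exact Finset.sum_congr rfl fun i _ => by ring

lemma crossEntropyE_top (p q : ι → ℝ) (hq : ∀ i, 0 < q i) (i0 : ι) (h0 : p i0 = 0) :
    crossEntropyE p q = ⊤ := by
  classical
  unfold crossEntropyE
  rw [← Finset.add_sum_erase _ _ (Finset.mem_univ i0)]
  have h1 : (q i0 : EReal) * negLogE (p i0) = ⊤ := by
    rw [negLogE, if_pos h0, EReal.coe_mul_top_of_pos (hq i0)]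
  rw [h1, EReal.top_add_of_ne_bot]
  refine Finset.sum_induction _ (fun x => x ≠ ⊥) (fun a b ha hb => ?_) (by simp) (fun i _ => ?_)
  · show a + b ≠ ⊥
    rw [Ne, EReal.add_eq_bot_iff]; push_neg; exact ⟨ha, hb⟩
  · by_cases hpi : p i = 0
    · rw [negLogE, if_pos hpi, EReal.coe_mul_top_of_pos (hq i)]; simp
    · rw [negLogE, if_neg hpi, ← EReal.coe_mul]; exact EReal.coe_ne_bot _

/-- Gibbs' inequality. -/
lemma gibbs_real (p q : ι → ℝ) (hp : ∀ i, 0 < p i) (hq : ∀ i, 0 < q i)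
    (hp1 : ∑ i, p i = 1) (hq1 : ∑ i, q i = 1) :
    -∑ i, q i * Real.log (q i) ≤ -∑ i, q i * Real.log (p i) := by
  have key : ∀ i, q i * Real.log (p i) - q i * Real.log (q i) ≤ p i - q i := by
    intro i
    have h := Real.log_le_sub_one_of_pos (div_pos (hp i) (hq i))
    rw [Real.log_div (hp i).ne' (hq i).ne'] at h
    have h2 := mul_le_mul_of_nonneg_left h (hq i).le
    have e : q i * (p i / q i - 1) = p i - q i := by
      rw [mul_sub, mul_div_cancel₀ _ (hq i).ne', mul_one]
    nlinarith [h2, e]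
  have hsum : ∑ i, (q i * Real.log (p i) - q i * Real.log (q i)) ≤ ∑ i, (p i - q i) :=
    Finset.sum_le_sum fun i _ => key i
  rw [Finset.sum_sub_distrib, Finset.sum_sub_distrib, hp1, hq1] at hsum
  linarith

lemma gibbs_EReal (p q : ι → ℝ) (hp : p ∈ stdSimplex ℝ ι) (hq : ∀ i, 0 < q i)
    (hq1 : ∑ i, q i = 1) :
    ((-∑ i, q i * Real.log (q i) : ℝ) : EReal) ≤ crossEntropyE p q := by
  by_cases hz : ∀ i, p i ≠ 0
  · rw [crossEntropyE_coe p q hz]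
    exact_mod_cast gibbs_real p q (fun i => (hp.1 i).lt_of_ne' (hz i)) hq hp.2 hq1
  · push_neg at hz
    obtain ⟨i0, h0⟩ := hz
    rw [crossEntropyE_top p q hq i0 h0]
    exact le_top

/-- First-order optimality of the entropy maximizer over a convex set. -/
lemma key_directional (Ξ : Set (ι → ℝ)) (hconv : Convex ℝ Ξ)
    (hsub : Ξ ⊆ stdSimplex ℝ ι) (hpos : ∀ q ∈ Ξ, ∀ i, 0 < q i)
    {qs : ι → ℝ} (hqs : qs ∈ Ξ)
    (hmax : ∀ q ∈ Ξ, (-∑ i, q i * Real.log (q i)) ≤ -∑ i, qs i * Real.log (qs i))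
    {q : ι → ℝ} (hq : q ∈ Ξ) :
    -∑ i, q i * Real.log (qs i) ≤ -∑ i, qs i * Real.log (qs i) := by
  classical
  set C : ℝ := ∑ i, (q i - qs i) ^ 2 / qs i with hC
  have hC0 : 0 ≤ C :=
    Finset.sum_nonneg fun i _ => div_nonneg (sq_nonneg _) (hpos qs hqs i).le
  have hq1 : ∑ i, q i = 1 := (hsub hq).2
  have hqs1 : ∑ i, qs i = 1 := (hsub hqs).2
  have main : ∀ t : ℝ, 0 < t → t ≤ 1 →
      (-∑ i, q i * Real.log (qs i)) - (-∑ i, qs i * Real.log (qs i)) ≤ t * C := by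
    intro t ht0 ht1
    set u : ι → ℝ := fun i => (1 - t) * qs i + t * q i with hu
    have huΞ : u ∈ Ξ := by
      have h := hconv hqs hq (a := 1 - t) (b := t) (by linarith) ht0.le (by ring)
      have e : (1 - t) • qs + t • q = u := by
        funext i; simp [hu, smul_eq_mul]
      exact e ▸ h
    have hupos : ∀ i, 0 < u i := hpos u huΞ
    have hu1 : ∑ i, u i = 1 := (hsub huΞ).2
    have step3 : ∑ i, u i * (Real.log (u i) - Real.log (qs i)) ≤ t ^ 2 * C := by
      have term : ∀ i, u i * (Real.log (u i) - Real.log (qs i))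
          ≤ (u i - qs i) ^ 2 / qs i + (u i - qs i) := by
        intro i
        have h := Real.log_le_sub_one_of_pos (div_pos (hupos i) (hpos qs hqs i))
        rw [Real.log_div (hupos i).ne' (hpos qs hqs i).ne'] at h
        have h2 := mul_le_mul_of_nonneg_left h (hupos i).le
        have e : u i * (u i / qs i - 1) = (u i - qs i) ^ 2 / qs i + (u i - qs i) := by
          have hne : qs i ≠ 0 := (hpos qs hqs i).ne'
          field_simp
          ring
        nlinarith [h2, e]
      have hsum : ∑ i, u i * (Real.log (u i) - Real.log (qs i))
          ≤ ∑ i, ((u i - qs i) ^ 2 / qs i + (u i - qs i)) :=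
        Finset.sum_le_sum fun i _ => term i
      have e1 : ∑ i, ((u i - qs i) ^ 2 / qs i + (u i - qs i)) = t ^ 2 * C := by
        rw [Finset.sum_add_distrib, Finset.sum_sub_distrib, hu1, hqs1, hC, Finset.mul_sum]
        have : ∀ i, (u i - qs i) ^ 2 / qs i = t ^ 2 * ((q i - qs i) ^ 2 / qs i) := by
          intro i
          have e2 : u i - qs i = t * (q i - qs i) := by simp only [hu]; ring
          rw [e2, mul_pow, mul_div_assoc]
        rw [Finset.sum_congr rfl fun i _ => this i]
        ring
      linarith
    have step5 : ∑ i, u i * Real.log (qs i)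
        = (1 - t) * ∑ i, qs i * Real.log (qs i) + t * ∑ i, q i * Real.log (qs i) := by
      rw [Finset.mul_sum, Finset.mul_sum, ← Finset.sum_add_distrib]
      exact Finset.sum_congr rfl fun i _ => by simp only [hu]; ring
    have step4 := hmax u huΞ
    have e3 : ∑ i, u i * Real.log (u i) - ∑ i, u i * Real.log (qs i) ≤ t ^ 2 * C := by
      rw [← Finset.sum_sub_distrib]
      refine le_trans (le_of_eq (Finset.sum_congr rfl fun i _ => (mul_sub _ _ _).symm)) step3
    have h6 : t * ((-∑ i, q i * Real.log (qs i)) - (-∑ i, qs i * Real.log (qs i)))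
        ≤ t * (t * C) := by nlinarith [step4, e3, step5]
    exact le_of_mul_le_mul_left h6 ht0
  by_contra hlt
  push_neg at hlt
  set D : ℝ := (-∑ i, q i * Real.log (qs i)) - (-∑ i, qs i * Real.log (qs i)) with hD
  have hD0 : 0 < D := by simp only [hD]; linarith
  set t : ℝ := min 1 (D / (2 * (C + 1))) with ht
  have ht0 : 0 < t := lt_min one_pos (div_pos hD0 (by linarith))
  have ht1 : t ≤ 1 := min_le_left _ _
  have h7 := main t ht0 ht1
  have h8 : t * C ≤ (D / (2 * (C + 1))) * C :=
    mul_le_mul_of_nonneg_right (min_le_right _ _) hC0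
  have h9 : (D / (2 * (C + 1))) * C < D := by
    rw [div_mul_eq_mul_div, div_lt_iff₀ (by linarith)]
    nlinarith
  have : D ≤ t * C := h7
  linarith

lemma sup_CE_eq (Ξ : Set (ι → ℝ)) (hconv : Convex ℝ Ξ)
    (hsub : Ξ ⊆ stdSimplex ℝ ι) (hpos : ∀ q ∈ Ξ, ∀ i, 0 < q i)
    {qs : ι → ℝ} (hqs : qs ∈ Ξ)
    (hmax : ∀ q ∈ Ξ, (-∑ i, q i * Real.log (q i)) ≤ -∑ i, qs i * Real.log (qs i)) :
    (⨆ q ∈ Ξ, crossEntropyE qs q)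
      = ((-∑ i, qs i * Real.log (qs i) : ℝ) : EReal) := by
  apply le_antisymm
  · refine iSup₂_le fun q hq => ?_
    rw [crossEntropyE_coe qs q (fun i => (hpos qs hqs i).ne')]
    exact_mod_cast key_directional Ξ hconv hsub hpos hqs hmax hq
  · exact le_iSup₂_of_le qs hqs
      (le_of_eq (crossEntropyE_coe qs qs (fun i => (hpos qs hqs i).ne')).symm)

lemma sup_H_eq (Ξ : Set (ι → ℝ)) {qs : ι → ℝ} (hqs : qs ∈ Ξ)
    (hmax : ∀ q ∈ Ξ, (-∑ i, q i * Real.log (q i)) ≤ -∑ i, qs i * Real.log (qs i)) :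
    (⨆ q ∈ Ξ, ((-∑ i, q i * Real.log (q i) : ℝ) : EReal))
      = ((-∑ i, qs i * Real.log (qs i) : ℝ) : EReal) := by
  apply le_antisymm
  · exact iSup₂_le fun q hq => by exact_mod_cast hmax q hq
  · exact le_iSup₂_of_le qs hqs le_rfl

end aux

/-- Robust log-loss minimization over a convex compact set Ξ of strictly positive
probability vectors equals entropy maximization over Ξ (Eq. (6)); moreover any
entropy maximizer in Ξ attains the common value as the minimizing predictor. -/
theorem robust_log_loss_eq_max_entropy {ι : Type*} [Fintype ι] [Nonempty ι]
    (Ξ : Set (ι → ℝ)) (hne : Ξ.Nonempty) (hconv : Convex ℝ Ξ)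
    (hcomp : IsCompact Ξ) (hsub : Ξ ⊆ stdSimplex ℝ ι)
    (hpos : ∀ q ∈ Ξ, ∀ i, 0 < q i) :
    (⨅ p ∈ stdSimplex ℝ ι, ⨆ q ∈ Ξ, crossEntropyE p q)
        = ⨆ q ∈ Ξ, ((-∑ i, q i * Real.log (q i) : ℝ) : EReal) ∧
    ∀ qs ∈ Ξ,
      (∀ q ∈ Ξ, (-∑ i, q i * Real.log (q i)) ≤ -∑ i, qs i * Real.log (qs i)) →
      (⨆ q ∈ Ξ, crossEntropyE qs q)
        = ⨆ q ∈ Ξ, ((-∑ i, q i * Real.log (q i) : ℝ) : EReal) := by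
  constructor
  · have hcont : Continuous (fun q : ι → ℝ => -∑ i, q i * Real.log (q i)) := by
      refine continuous_neg.comp (continuous_finset_sum _ fun i _ => ?_)
      exact Real.continuous_mul_log.comp (continuous_apply i)
    obtain ⟨qs, hqs, hmax'⟩ := hcomp.exists_isMaxOn hne hcont.continuousOn
    have hmax : ∀ q ∈ Ξ, (-∑ i, q i * Real.log (q i)) ≤ -∑ i, qs i * Real.log (qs i) :=
      fun q hq => hmax' hq
    apply le_antisymm
    · refine iInf₂_le_of_le qs (hsub hqs) ?_
      rw [sup_CE_eq Ξ hconv hsub hpos hqs hmax, sup_H_eq Ξ hqs hmax]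
    · refine le_iInf₂ fun p hp => iSup₂_le fun q hq => ?_
      exact le_trans (gibbs_EReal p q hp (hpos q hq) (hsub hq).2)
        (le_iSup₂_of_le q hq le_rfl)
  · intro qs hqs hmax
    rw [sup_CE_eq Ξ hconv hsub hpos hqs hmax, sup_H_eq Ξ hqs hmax]
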